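/- For odd n and ⌈n/2⌉ < p ≤ n−1, the inequality ∑_{k=n−p+1}^{p} C(n−1, k−1)² ≥ (2p−n−1)·C(n−1, p−1)² ≥ 4·C(n−2, p−1)² holds. -/
import Mathlib

lemma choose_mono_half (N a b : ℕ) (hab : a ≤ b) (hb : 2 * b ≤ N) :
    N.choose a ≤ N.choose b := by
  induction b with
  | zero => obtain rfl := Nat.le_zero.mp hab; exact le_rfl
  | succ b ih =>
    rcases Nat.eq_or_lt_of_le hab with rfl | h
    · exact le_rfl
    · exact (ih (by omega) (by omega)).trans
        (Nat.choose_le_succ_of_lt_half_left (by omega))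

lemma choose_ge_of_between (N a j : ℕ) (haN : a ≤ N) (h1 : N - a ≤ j) (h2 : j ≤ a) :
    N.choose a ≤ N.choose j := by
  rw [← Nat.choose_symm haN]
  rcases le_or_gt (2 * j) N with hj | hj
  · exact choose_mono_half N _ _ h1 hj
  · rw [← Nat.choose_symm (h2.trans haN)]
    exact choose_mono_half N _ _ (by omega) (by omega)

/-- For odd `n` and `⌈n/2⌉ < p ≤ n−1`,
`∑_{k=n−p+1}^{p} C(n−1,k−1)² ≥ (2p−n−1) C(n−1,p−1)² ≥ 4 C(n−2,p−1)²`. -/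
theorem stmt_19 (n p : ℕ) (hnodd : Odd n) (hp : (n + 1) / 2 < p) (hpn : p ≤ n - 1) :
    (∑ k ∈ Finset.Icc (n - p + 1) p, ((n - 1).choose (k - 1)) ^ 2 ≥
        (2 * p - n - 1) * ((n - 1).choose (p - 1)) ^ 2) ∧
      (2 * p - n - 1) * ((n - 1).choose (p - 1)) ^ 2 ≥
        4 * ((n - 2).choose (p - 1)) ^ 2 := by
  obtain ⟨m, rfl⟩ := hnodd
  have hm : m + 1 < p := by omega
  have hp2 : p ≤ 2 * m := by omega
  have e1 : 2 * m + 1 - 1 = 2 * m := by omega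
  constructor
  · have key : ∀ k ∈ Finset.Icc (2 * m + 1 - p + 1) p,
        ((2 * m + 1 - 1).choose (p - 1)) ^ 2 ≤ ((2 * m + 1 - 1).choose (k - 1)) ^ 2 := by
      intro k hk
      simp only [Finset.mem_Icc] at hk
      have h := choose_ge_of_between (2 * m) (p - 1) (k - 1) (by omega) (by omega) (by omega)
      rw [e1]
      exact Nat.pow_le_pow_left h 2
    have hsum := Finset.card_nsmul_le_sum _ _ _ key
    have hcard : (Finset.Icc (2 * m + 1 - p + 1) p).card = 2 * p - 2 * m - 1 := by
      rw [Nat.card_Icc]; omega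
    rw [hcard, smul_eq_mul] at hsum
    refine le_trans ?_ hsum
    exact Nat.mul_le_mul_right _ (by omega)
  · have h2C : 2 * ((2 * m + 1 - 2).choose (p - 1)) ≤ (2 * m + 1 - 1).choose (p - 1) := by
      obtain ⟨q, rfl⟩ : ∃ q, p = q + 2 := ⟨p - 2, by omega⟩
      have e2 : 2 * m + 1 - 1 = (2 * m - 1) + 1 := by omega
      have e3 : 2 * m + 1 - 2 = 2 * m - 1 := by omega
      have e4 : q + 2 - 1 = q + 1 := rfl
      rw [e2, e3, e4, Nat.choose_succ_succ]
      have hmono : (2 * m - 1).choose (q + 1) ≤ (2 * m - 1).choose q := by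
        rw [← Nat.choose_symm (show q + 1 ≤ 2 * m - 1 by omega),
            ← Nat.choose_symm (show q ≤ 2 * m - 1 by omega)]
        exact choose_mono_half _ _ _ (by omega) (by omega)
      simp only [Nat.succ_eq_add_one]
      omega
    have h1 : 4 * ((2 * m + 1 - 2).choose (p - 1)) ^ 2
        ≤ ((2 * m + 1 - 1).choose (p - 1)) ^ 2 := by
      calc 4 * ((2 * m + 1 - 2).choose (p - 1)) ^ 2
          = (2 * ((2 * m + 1 - 2).choose (p - 1))) ^ 2 := by ring
        _ ≤ ((2 * m + 1 - 1).choose (p - 1)) ^ 2 := Nat.pow_le_pow_left h2C 2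
    exact h1.trans (Nat.le_mul_of_pos_left _ (by omega))
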